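/- (Coercivity, growth part.) For every K ∈ 𝕂, the cost satisfies the lower bound C(K) ≥ μ · Λ_min(R) · ‖K‖₂². Consequently, for any sequence {K^l} ⊂ 𝕂 with ‖K^l‖₂ → +∞ one has C(K^l) → +∞. -/

import Mathlib

open Matrix Filter
open scoped Kronecker Topology

namespace MJLS

noncomputable section

attribute [local instance] Classical.propDecidable

/-- Closed-loop matrices `Γ i = A i - B i * K i`. -/
def Gam {d k N : ℕ} (A : Fin N → Matrix (Fin d) (Fin d) ℝ)
    (B : Fin N → Matrix (Fin d) (Fin k) ℝ)
    (K : Fin N → Matrix (Fin k) (Fin d) ℝ) : Fin N → Matrix (Fin d) (Fin d) ℝ :=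
  fun i => A i - B i * K i

/-- The operator `E_i(V) = ∑ j, p i j • V j`. -/
def opE {d N : ℕ} (Pr : Matrix (Fin N) (Fin N) ℝ)
    (V : Fin N → Matrix (Fin d) (Fin d) ℝ) : Fin N → Matrix (Fin d) (Fin d) ℝ :=
  fun i => ∑ j, Pr i j • V j

/-- The matrix `𝒜 = diag(Γᵀ ⊗ Γᵀ) (P ⊗ I)`. -/
def calA {d N : ℕ} (Pr : Matrix (Fin N) (Fin N) ℝ)
    (Γ : Fin N → Matrix (Fin d) (Fin d) ℝ) :
    Matrix (Fin N × Fin d × Fin d) (Fin N × Fin d × Fin d) ℝ :=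
  (Matrix.reindex (Equiv.prodComm (Fin d × Fin d) (Fin N))
      (Equiv.prodComm (Fin d × Fin d) (Fin N))
      (Matrix.blockDiagonal fun i => (Γ i)ᵀ ⊗ₖ (Γ i)ᵀ)) *
    (Pr ⊗ₖ (1 : Matrix (Fin d × Fin d) (Fin d × Fin d) ℝ))

/-- `K` is mean-square stabilizing: the spectral radius of `𝒜` is less than `1`. -/
def MSS {d k N : ℕ} (Pr : Matrix (Fin N) (Fin N) ℝ)
    (A : Fin N → Matrix (Fin d) (Fin d) ℝ) (B : Fin N → Matrix (Fin d) (Fin k) ℝ)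
    (K : Fin N → Matrix (Fin k) (Fin d) ℝ) : Prop :=
  spectralRadius ℂ ((calA Pr (Gam A B K)).map (algebraMap ℝ ℂ)) < 1

/-- `P` solves the coupled Lyapunov equations for the policy `K`. -/
def IsLyap {d k N : ℕ} (Pr : Matrix (Fin N) (Fin N) ℝ)
    (A : Fin N → Matrix (Fin d) (Fin d) ℝ) (B : Fin N → Matrix (Fin d) (Fin k) ℝ)
    (Q : Fin N → Matrix (Fin d) (Fin d) ℝ) (R : Fin N → Matrix (Fin k) (Fin k) ℝ)
    (K : Fin N → Matrix (Fin k) (Fin d) ℝ)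
    (P : Fin N → Matrix (Fin d) (Fin d) ℝ) : Prop :=
  ∀ i, P i = Q i + (K i)ᵀ * R i * K i + (Gam A B K i)ᵀ * opE Pr P i * Gam A B K i

/-- `P^K`, the (for mean-square stabilizing `K`, unique) solution of the coupled
Lyapunov equations. -/
def PK {d k N : ℕ} (Pr : Matrix (Fin N) (Fin N) ℝ)
    (A : Fin N → Matrix (Fin d) (Fin d) ℝ) (B : Fin N → Matrix (Fin d) (Fin k) ℝ)
    (Q : Fin N → Matrix (Fin d) (Fin d) ℝ) (R : Fin N → Matrix (Fin k) (Fin k) ℝ)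
    (K : Fin N → Matrix (Fin k) (Fin d) ℝ) : Fin N → Matrix (Fin d) (Fin d) ℝ :=
  if h : ∃ P, IsLyap Pr A B Q R K P then h.choose else 0

/-- The LQR cost `C(K) = ∑ i, π i * tr(P^K_i Sg)`. -/
def cost {d k N : ℕ} (Pr : Matrix (Fin N) (Fin N) ℝ)
    (A : Fin N → Matrix (Fin d) (Fin d) ℝ) (B : Fin N → Matrix (Fin d) (Fin k) ℝ)
    (Q : Fin N → Matrix (Fin d) (Fin d) ℝ) (R : Fin N → Matrix (Fin k) (Fin k) ℝ)
    (piv : Fin N → ℝ) (Sg : Matrix (Fin d) (Fin d) ℝ)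
    (K : Fin N → Matrix (Fin k) (Fin d) ℝ) : ℝ :=
  ∑ i, piv i * (PK Pr A B Q R K i * Sg).trace

/-- The operator `T_j(V) = ∑ i, p i j • (Γ i * V i * Γ iᵀ)`. -/
def opT {d N : ℕ} (Pr : Matrix (Fin N) (Fin N) ℝ)
    (Γ : Fin N → Matrix (Fin d) (Fin d) ℝ)
    (V : Fin N → Matrix (Fin d) (Fin d) ℝ) : Fin N → Matrix (Fin d) (Fin d) ℝ :=
  fun j => ∑ i, Pr i j • (Γ i * V i * (Γ i)ᵀ)

/-- `𝐗^K = ∑_{t=0}^∞ T^t(X(0))` with `X_i(0) = π i • Sg`. -/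
def XK {d N : ℕ} (Pr : Matrix (Fin N) (Fin N) ℝ) (piv : Fin N → ℝ)
    (Sg : Matrix (Fin d) (Fin d) ℝ) (Γ : Fin N → Matrix (Fin d) (Fin d) ℝ) :
    Fin N → Matrix (Fin d) (Fin d) ℝ :=
  ∑' t : ℕ, (opT Pr Γ)^[t] (fun i => piv i • Sg)

/-- `L^K_i = (R i + B iᵀ E_i(P^K) B i) K i - B iᵀ E_i(P^K) A i`. -/
def LK {d k N : ℕ} (Pr : Matrix (Fin N) (Fin N) ℝ)
    (A : Fin N → Matrix (Fin d) (Fin d) ℝ) (B : Fin N → Matrix (Fin d) (Fin k) ℝ)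
    (Q : Fin N → Matrix (Fin d) (Fin d) ℝ) (R : Fin N → Matrix (Fin k) (Fin k) ℝ)
    (K : Fin N → Matrix (Fin k) (Fin d) ℝ) : Fin N → Matrix (Fin k) (Fin d) ℝ :=
  fun i => (R i + (B i)ᵀ * opE Pr (PK Pr A B Q R K) i * B i) * K i
    - (B i)ᵀ * opE Pr (PK Pr A B Q R K) i * A i

/-- The operator `L_i(V) = Γ iᵀ E_i(V) Γ i`. -/
def opL {d N : ℕ} (Pr : Matrix (Fin N) (Fin N) ℝ)
    (Γ : Fin N → Matrix (Fin d) (Fin d) ℝ)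
    (V : Fin N → Matrix (Fin d) (Fin d) ℝ) : Fin N → Matrix (Fin d) (Fin d) ℝ :=
  fun i => (Γ i)ᵀ * opE Pr V i * Γ i

/-- `(P^K)'[E] = ∑_{t=0}^∞ L^t(Eᵀ L^K + (L^K)ᵀ E)`. -/
def PKd {d k N : ℕ} (Pr : Matrix (Fin N) (Fin N) ℝ)
    (Γ : Fin N → Matrix (Fin d) (Fin d) ℝ)
    (Lk E : Fin N → Matrix (Fin k) (Fin d) ℝ) : Fin N → Matrix (Fin d) (Fin d) ℝ :=
  ∑' t : ℕ, (opL Pr Γ)^[t] (fun i => (E i)ᵀ * Lk i + (Lk i)ᵀ * E i)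

/-- `‖V‖₂² = ∑ i, tr(V iᵀ V i)`. -/
def norm2sq {a b N : ℕ} (V : Fin N → Matrix (Fin a) (Fin b) ℝ) : ℝ :=
  ∑ i, ((V i)ᵀ * V i).trace

/-- The inner product `⟨V, S⟩ = ∑ i, tr(V iᵀ S i)`. -/
def ip {a b N : ℕ} (V S : Fin N → Matrix (Fin a) (Fin b) ℝ) : ℝ :=
  ∑ i, ((V i)ᵀ * S i).trace

/-- The spectral norm (maximal singular value) of a matrix. -/
def specNorm {a b : ℕ} (M : Matrix (Fin a) (Fin b) ℝ) : ℝ :=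
  ⨆ x : {x : EuclideanSpace ℝ (Fin b) // ‖x‖ ≤ 1}, ‖Matrix.toEuclideanLin M x.1‖

/-- The minimal singular value of a square matrix. -/
def sigmaMin {a : ℕ} (M : Matrix (Fin a) (Fin a) ℝ) : ℝ :=
  ⨅ x : {x : EuclideanSpace ℝ (Fin a) // ‖x‖ = 1}, ‖Matrix.toEuclideanLin M x.1‖

/-- `‖V‖_max = max_i ‖V i‖` (spectral norms). -/
def maxNorm {a b N : ℕ} (V : Fin N → Matrix (Fin a) (Fin b) ℝ) : ℝ :=
  ⨆ i, specNorm (V i)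

/-- `Λ_min(V) = min_i σ_min(V i)`. -/
def lamMin {a N : ℕ} (V : Fin N → Matrix (Fin a) (Fin a) ℝ) : ℝ :=
  ⨅ i, sigmaMin (V i)

/-- `μ = (min_i π i) · σ_min(Sg)`. -/
def mu {d N : ℕ} (piv : Fin N → ℝ) (Sg : Matrix (Fin d) (Fin d) ℝ) : ℝ :=
  (⨅ i, piv i) * sigmaMin Sg

/-- `ξ(α) = (1/Λ_min(Q))·((1 + ‖B‖²_max)·α/μ + ‖R‖_max) − 1`. -/
def xi {d k N : ℕ} (B : Fin N → Matrix (Fin d) (Fin k) ℝ)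
    (R : Fin N → Matrix (Fin k) (Fin k) ℝ) (Q : Fin N → Matrix (Fin d) (Fin d) ℝ)
    (piv : Fin N → ℝ) (Sg : Matrix (Fin d) (Fin d) ℝ) (α : ℝ) : ℝ :=
  (1 / lamMin Q) * ((1 + maxNorm B ^ 2) * α / mu piv Sg + maxNorm R) - 1

/-- The smoothness constant
`L(α) = 2·(‖R‖_max + ‖B‖²_max·(1 + 2ξ(α)/‖B‖_max)·α/μ)·α/Λ_min(Q)`. -/
def Lsm {d k N : ℕ} (B : Fin N → Matrix (Fin d) (Fin k) ℝ)
    (R : Fin N → Matrix (Fin k) (Fin k) ℝ) (Q : Fin N → Matrix (Fin d) (Fin d) ℝ)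
    (piv : Fin N → ℝ) (Sg : Matrix (Fin d) (Fin d) ℝ) (α : ℝ) : ℝ :=
  2 * (maxNorm R + maxNorm B ^ 2 * (1 + 2 * xi B R Q piv Sg α / maxNorm B)
      * α / mu piv Sg) * α / lamMin Q

end

section Aux
variable {d k N : ℕ}

/-- Flattening of a tuple of matrices. -/
def flat (V : Fin N → Matrix (Fin d) (Fin d) ℝ) : Fin N × Fin d × Fin d → ℝ :=
  fun p => V p.1 p.2.1 p.2.2

lemma calA_apply (Pr : Matrix (Fin N) (Fin N) ℝ) (Γ : Fin N → Matrix (Fin d) (Fin d) ℝ)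
    (i j : Fin N) (a b c e : Fin d) :
    calA Pr Γ (i, a, b) (j, c, e) = Γ i c a * Γ i e b * Pr i j := by
  classical
  simp only [calA, Matrix.mul_apply, Matrix.reindex_apply, Matrix.submatrix_apply,
    Equiv.prodComm_symm, Equiv.prodComm_apply, Prod.swap_prod_mk,
    Matrix.blockDiagonal_apply, Matrix.kroneckerMap_apply, Matrix.one_apply,
    Matrix.transpose_apply]
  simp only [Prod.fst_swap, Prod.snd_swap, ite_mul, zero_mul, mul_ite, mul_one, mul_zero]
  rw [Fintype.sum_prod_type]
  simp only [Finset.sum_ite_eq, Finset.sum_ite_eq', Finset.mem_univ, if_true]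

lemma flat_opL (Pr : Matrix (Fin N) (Fin N) ℝ) (Γ : Fin N → Matrix (Fin d) (Fin d) ℝ)
    (V : Fin N → Matrix (Fin d) (Fin d) ℝ) :
    flat (opL Pr Γ V) = calA Pr Γ *ᵥ flat V := by
  funext p
  obtain ⟨i, a, b⟩ := p
  simp only [flat, Matrix.mulVec, dotProduct]
  rw [Fintype.sum_prod_type]
  simp only [Fintype.sum_prod_type, calA_apply]
  simp only [opL, opE, Matrix.mul_apply, Matrix.transpose_apply, Finset.sum_apply,
    Matrix.sum_apply, Matrix.smul_apply, smul_eq_mul, Finset.mul_sum, Finset.sum_mul]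
  rw [Finset.sum_comm]
  refine Finset.sum_congr rfl fun n _ => ?_
  rw [Finset.sum_comm]
  refine Finset.sum_congr rfl fun p _ => Finset.sum_congr rfl fun q _ => ?_
  ring

end Aux
section Aux2
variable {n m : ℕ}

lemma psd_mk {M : Matrix (Fin n) (Fin n) ℝ} (h1 : Mᵀ = M)
    (h2 : ∀ x, 0 ≤ x ⬝ᵥ M *ᵥ x) : M.PosSemidef :=
  .of_dotProduct_mulVec_nonneg (by rw [Matrix.IsHermitian, Matrix.conjTranspose_eq_transpose_of_trivial, h1])
   (fun x => by simpa using h2 x)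

lemma psd_quad {M : Matrix (Fin n) (Fin n) ℝ} (h : M.PosSemidef) (x : Fin n → ℝ) :
    0 ≤ x ⬝ᵥ M *ᵥ x := by simpa using h.dotProduct_mulVec_nonneg x

lemma psd_symm {M : Matrix (Fin n) (Fin n) ℝ} (h : M.PosSemidef) : Mᵀ = M := by
  rw [← Matrix.conjTranspose_eq_transpose_of_trivial]; exact h.1

lemma psd_add {M P : Matrix (Fin n) (Fin n) ℝ} (hM : M.PosSemidef) (hP : P.PosSemidef) :
    (M + P).PosSemidef := by
  refine psd_mk (by rw [Matrix.transpose_add, psd_symm hM, psd_symm hP]) fun x => ?_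
  rw [Matrix.add_mulVec, dotProduct_add]
  exact add_nonneg (psd_quad hM x) (psd_quad hP x)

lemma psd_smul {M : Matrix (Fin n) (Fin n) ℝ} {c : ℝ} (hc : 0 ≤ c) (hM : M.PosSemidef) :
    (c • M).PosSemidef := by
  refine psd_mk (by rw [Matrix.transpose_smul, psd_symm hM]) fun x => ?_
  rw [Matrix.smul_mulVec, dotProduct_smul, smul_eq_mul]
  exact mul_nonneg hc (psd_quad hM x)

lemma psd_sum {ι : Type*} (s : Finset ι) (f : ι → Matrix (Fin n) (Fin n) ℝ)
    (h : ∀ i ∈ s, (f i).PosSemidef) : (∑ i ∈ s, f i).PosSemidef :=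
  Finset.sum_induction f _ (fun _ _ ha hb => psd_add ha hb) Matrix.PosSemidef.zero h

lemma psd_conj {M : Matrix (Fin n) (Fin n) ℝ} (hM : M.PosSemidef)
    (C : Matrix (Fin n) (Fin m) ℝ) : (Cᵀ * M * C).PosSemidef := by
  have := hM.conjTranspose_mul_mul_same C
  rwa [Matrix.conjTranspose_eq_transpose_of_trivial] at this

end Aux2

section Aux3
variable {d k N : ℕ}
variable {Pr : Matrix (Fin N) (Fin N) ℝ} {Γ : Fin N → Matrix (Fin d) (Fin d) ℝ}

lemma opE_psd (hPr : ∀ i j, 0 ≤ Pr i j) {V : Fin N → Matrix (Fin d) (Fin d) ℝ}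
    (hV : ∀ j, (V j).PosSemidef) (i : Fin N) : (opE Pr V i).PosSemidef :=
  psd_sum _ _ fun j _ => psd_smul (hPr i j) (hV j)

lemma opL_psd (hPr : ∀ i j, 0 ≤ Pr i j) {V : Fin N → Matrix (Fin d) (Fin d) ℝ}
    (hV : ∀ j, (V j).PosSemidef) (i : Fin N) : (opL Pr Γ V i).PosSemidef :=
  psd_conj (opE_psd hPr hV i) (Γ i)

lemma iter_opL_psd (hPr : ∀ i j, 0 ≤ Pr i j) {V : Fin N → Matrix (Fin d) (Fin d) ℝ}
    (hV : ∀ j, (V j).PosSemidef) (t : ℕ) (i : Fin N) :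
    (((opL Pr Γ)^[t] V) i).PosSemidef := by
  induction t generalizing V hV with
  | zero => exact hV i
  | succ t ih =>
    rw [Function.iterate_succ_apply]
    exact ih (fun j => opL_psd hPr hV j)

lemma flat_iter_opL (Pr : Matrix (Fin N) (Fin N) ℝ) (Γ : Fin N → Matrix (Fin d) (Fin d) ℝ)
    (V : Fin N → Matrix (Fin d) (Fin d) ℝ) (t : ℕ) :
    flat ((opL Pr Γ)^[t] V) = (calA Pr Γ)^t *ᵥ flat V := by
  induction t with
  | zero => simp [Matrix.one_mulVec]
  | succ t ih =>
    rw [Function.iterate_succ_apply', flat_opL, ih, Matrix.mulVec_mulVec, ← pow_succ']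

lemma vec_telescope {ι : Type*} [Fintype ι] [DecidableEq ι] (M : Matrix ι ι ℝ) (p c : ι → ℝ)
    (h : p = c + M *ᵥ p) (n : ℕ) :
    p = (∑ t ∈ Finset.range n, M ^ t) *ᵥ c + M ^ n *ᵥ p := by
  induction n with
  | zero => simp [Matrix.one_mulVec]
  | succ n ih =>
    calc p = (∑ t ∈ Finset.range n, M ^ t) *ᵥ c + M ^ n *ᵥ p := ih
    _ = (∑ t ∈ Finset.range n, M ^ t) *ᵥ c + M ^ n *ᵥ (c + M *ᵥ p) := by rw [← h]
    _ = (∑ t ∈ Finset.range (n+1), M ^ t) *ᵥ c + M ^ (n+1) *ᵥ p := by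
        rw [Matrix.mulVec_add, Finset.sum_range_succ, Matrix.add_mulVec, Matrix.mulVec_mulVec,
          ← pow_succ]
        ring_nf

end Aux3
section Aux4
open scoped ENNReal NNReal
attribute [local instance] Matrix.linftyOpNormedRing Matrix.linftyOpNormedAlgebra
  Matrix.linftyOpNormedAddCommGroup Matrix.linftyOpNormedSpace

variable {ι : Type*} [Fintype ι] [DecidableEq ι]

lemma nnnorm_map_complex (M : Matrix ι ι ℝ) : ‖M.map (algebraMap ℝ ℂ)‖₊ = ‖M‖₊ := by
  simp [Matrix.linfty_opNNNorm_def, Matrix.map_apply]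

lemma exists_pow_nnnorm_lt (M : Matrix ι ι ℝ)
    (h : spectralRadius ℂ (M.map (algebraMap ℝ ℂ)) < 1) :
    ∃ m, 0 < m ∧ ‖M ^ m‖₊ < 1 := by
  haveI : CompleteSpace (Matrix ι ι ℂ) := FiniteDimensional.complete ℂ _
  have hg := spectrum.pow_nnnorm_pow_one_div_tendsto_nhds_spectralRadius
    (M.map (algebraMap ℝ ℂ))
  have h1 := hg.eventually_lt_const h
  obtain ⟨n, hn1, hn2⟩ := (h1.and (Filter.eventually_ge_atTop 1)).exists
  have hmap : (M.map (algebraMap ℝ ℂ)) ^ n = (M ^ n).map (algebraMap ℝ ℂ) := by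
    rw [← RingHom.mapMatrix_apply, ← RingHom.mapMatrix_apply, ← map_pow]
  refine ⟨n, hn2, ?_⟩
  by_contra hc
  push_neg at hc
  have : (1 : ℝ≥0∞) ≤ (‖(M.map (algebraMap ℝ ℂ)) ^ n‖₊ : ℝ≥0∞) ^ (1 / (n:ℝ)) := by
    apply ENNReal.one_le_rpow
    · rw [hmap, nnnorm_map_complex]
      exact_mod_cast hc
    · positivity
  exact absurd hn1 (not_lt.mpr this)

lemma mulVec_pow_entry_tendsto [Nonempty ι] (M : Matrix ι ι ℝ) {m : ℕ} (hm : 0 < m)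
    (hnorm : ‖M ^ m‖ < 1) (p : ι → ℝ) (x : ι) :
    Filter.Tendsto (fun q => (M ^ (m * q) *ᵥ p) x) Filter.atTop (𝓝 0) := by
  have hr0 : 0 ≤ ‖M ^ m‖ := norm_nonneg _
  apply squeeze_zero_norm (a := fun q => ‖M ^ m‖ ^ q * ‖p‖)
  · intro q
    calc ‖(M ^ (m*q) *ᵥ p) x‖ ≤ ‖M ^ (m*q) *ᵥ p‖ := norm_le_pi_norm _ x
    _ ≤ ‖M ^ (m*q)‖ * ‖p‖ := Matrix.linfty_opNorm_mulVec _ _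
    _ ≤ ‖M ^ m‖ ^ q * ‖p‖ := by
        rcases Nat.eq_zero_or_pos q with hq | hq
        · subst hq; simp
        · refine mul_le_mul_of_nonneg_right ?_ (norm_nonneg _)
          rw [pow_mul]
          exact norm_pow_le' _ hq
  · simpa using (tendsto_pow_atTop_nhds_zero_of_lt_one hr0 hnorm).mul_const ‖p‖

lemma isUnit_det_one_sub (M : Matrix ι ι ℝ) {m : ℕ} (hnorm : ‖M ^ m‖ < 1) :
    IsUnit (1 - M).det := by
  haveI : CompleteSpace (Matrix ι ι ℝ) := FiniteDimensional.complete ℝ _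
  have h1 : IsUnit (1 - M ^ m) := isUnit_one_sub_of_norm_lt_one hnorm
  have hfac : 1 - M ^ m = (1 - M) * ∑ t ∈ Finset.range m, M ^ t := by
    have := mul_geom_sum M m
    rw [← neg_sub M 1, neg_mul, this, neg_sub]
  rw [hfac] at h1
  rw [Matrix.isUnit_iff_isUnit_det, Matrix.det_mul] at h1
  exact isUnit_of_mul_isUnit_left h1

end Aux4

-- combined, norm-free interface (placed in its own section with local norm instances)
section Aux4b
attribute [local instance] Matrix.linftyOpNormedRing Matrix.linftyOpNormedAlgebra
  Matrix.linftyOpNormedAddCommGroup Matrix.linftyOpNormedSpace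

lemma spectral_decay {ι : Type*} [Fintype ι] [DecidableEq ι] [Nonempty ι] (M : Matrix ι ι ℝ)
    (h : spectralRadius ℂ (M.map (algebraMap ℝ ℂ)) < 1) :
    IsUnit (1 - M).det ∧ ∃ m, 0 < m ∧ ∀ (p : ι → ℝ) (x : ι),
      Filter.Tendsto (fun q => (M ^ (m * q) *ᵥ p) x) Filter.atTop (𝓝 0) := by
  obtain ⟨m, hm_pos, hm⟩ := exists_pow_nnnorm_lt M h
  have hm' : ‖M ^ m‖ < 1 := by exact_mod_cast hm
  exact ⟨isUnit_det_one_sub M hm', m, hm_pos,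
    fun p x => mulVec_pow_entry_tendsto M hm_pos hm' p x⟩

end Aux4b
section Aux5
open scoped RealInnerProductSpace
variable {n : ℕ}

lemma sigmaMin_facts {M : Matrix (Fin n) (Fin n) ℝ} (hM : M.PosDef) (hn : 0 < n) :
    0 < sigmaMin M ∧ ∀ x : Fin n → ℝ, sigmaMin M * ∑ i, x i ^ 2 ≤ x ⬝ᵥ M *ᵥ x := by
  classical
  haveI : Nonempty (Fin n) := ⟨⟨0, hn⟩⟩
  have hH : M.IsHermitian := hM.1
  set b := hH.eigenvectorBasis with hb
  obtain ⟨j₀, hj₀⟩ := Finite.exists_min hH.eigenvalues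
  set lm := hH.eigenvalues j₀ with hlm
  have hlm_pos : 0 < lm := hM.eigenvalues_pos j₀
  -- T (b i) = λ i • b i
  have hTb : ∀ i, Matrix.toEuclideanLin M (b i) = hH.eigenvalues i • b i := by
    intro i
    apply (WithLp.equiv 2 (Fin n → ℝ)).injective
    simp only [Matrix.toEuclideanLin_apply]
    show M *ᵥ (b i).ofLp = hH.eigenvalues i • (b i).ofLp
    exact hH.mulVec_eigenvectorBasis i
  -- inner expansion
  have hinner : ∀ x : EuclideanSpace ℝ (Fin n),
      ⟪x, Matrix.toEuclideanLin M x⟫ = ∑ i, hH.eigenvalues i * (b.repr x i) ^ 2 := by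
    intro x
    have hx := b.sum_repr x
    have hT : Matrix.toEuclideanLin M x = ∑ i, (hH.eigenvalues i * b.repr x i) • b i := by
      conv_lhs => rw [← hx]
      rw [map_sum]
      refine Finset.sum_congr rfl fun i _ => ?_
      rw [_root_.map_smul, hTb i, smul_smul, mul_comm]
    calc ⟪x, Matrix.toEuclideanLin M x⟫
        = ⟪∑ i, b.repr x i • b i, Matrix.toEuclideanLin M x⟫ := by rw [hx]
      _ = ∑ i, (b.repr x i) * ⟪b i, Matrix.toEuclideanLin M x⟫ := by
          rw [sum_inner]
          exact Finset.sum_congr rfl fun i _ => real_inner_smul_left _ _ _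
      _ = ∑ i, hH.eigenvalues i * (b.repr x i) ^ 2 := by
          refine Finset.sum_congr rfl fun i _ => ?_
          rw [hT, b.orthonormal.inner_right_fintype]
          ring
  have hnormsq : ∀ x : EuclideanSpace ℝ (Fin n), ‖x‖ ^ 2 = ∑ i, (b.repr x i) ^ 2 := by
    intro x
    rw [← b.repr.norm_map x, EuclideanSpace.norm_eq, Real.sq_sqrt]
    · exact Finset.sum_congr rfl fun i _ => by rw [Real.norm_eq_abs, sq_abs]
    · positivity
  have hray : ∀ x : EuclideanSpace ℝ (Fin n),
      lm * ‖x‖ ^ 2 ≤ ⟪x, Matrix.toEuclideanLin M x⟫ := by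
    intro x
    rw [hinner, hnormsq, Finset.mul_sum]
    exact Finset.sum_le_sum fun i _ =>
      mul_le_mul_of_nonneg_right (hj₀ i) (sq_nonneg _)
  have hbdd : BddBelow (Set.range fun x : {x : EuclideanSpace ℝ (Fin n) // ‖x‖ = 1} =>
      ‖Matrix.toEuclideanLin M x.1‖) := ⟨0, by rintro _ ⟨y, rfl⟩; exact norm_nonneg _⟩
  have hunit : ‖b j₀‖ = 1 := b.orthonormal.1 j₀
  haveI : Nonempty {x : EuclideanSpace ℝ (Fin n) // ‖x‖ = 1} := ⟨⟨b j₀, hunit⟩⟩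
  have hS1 : sigmaMin M ≤ lm := by
    have := ciInf_le hbdd (⟨b j₀, hunit⟩ :
      {x : EuclideanSpace ℝ (Fin n) // ‖x‖ = 1})
    rw [hTb j₀, norm_smul, hunit, Real.norm_eq_abs, abs_of_pos hlm_pos, mul_one] at this
    exact this
  have hS3 : lm ≤ sigmaMin M := by
    refine le_ciInf fun x => ?_
    have h1 : lm * ‖x.1‖ ^ 2 ≤ ⟪x.1, Matrix.toEuclideanLin M x.1⟫ := hray x.1
    rw [x.2] at h1
    have h2 : ⟪x.1, Matrix.toEuclideanLin M x.1⟫ ≤ ‖x.1‖ * ‖Matrix.toEuclideanLin M x.1‖ :=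
      real_inner_le_norm _ _
    rw [x.2, one_mul] at h2
    simpa using h1.trans h2
  constructor
  · exact lt_of_lt_of_le hlm_pos hS3
  · intro x
    set xE : EuclideanSpace ℝ (Fin n) := (WithLp.equiv 2 (Fin n → ℝ)).symm x with hxE
    have hsum : ∑ i, x i ^ 2 = ‖xE‖ ^ 2 := by
      rw [EuclideanSpace.norm_eq, Real.sq_sqrt (by positivity)]
      exact Finset.sum_congr rfl fun i _ => by
        rw [Real.norm_eq_abs, sq_abs]; rfl
    have hdot : ⟪xE, Matrix.toEuclideanLin M xE⟫ = x ⬝ᵥ M *ᵥ x := by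
      simp only [Matrix.toEuclideanLin_apply, hxE, Equiv.apply_symm_apply]
      rw [PiLp.inner_apply]
      simp only [RCLike.inner_apply, conj_trivial]
      rw [dotProduct_comm]; rfl
    calc sigmaMin M * ∑ i, x i ^ 2 ≤ lm * ∑ i, x i ^ 2 :=
          mul_le_mul_of_nonneg_right hS1 (by positivity)
      _ = lm * ‖xE‖ ^ 2 := by rw [hsum]
      _ ≤ ⟪xE, Matrix.toEuclideanLin M xE⟫ := hray xE
      _ = x ⬝ᵥ M *ᵥ x := hdot

end Aux5
section Aux6
variable {m n : ℕ}

lemma sum_mulVec {ι : Type*} [Fintype ι] {κ : Type*} (s : Finset κ)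
    (f : κ → Matrix ι ι ℝ) (v : ι → ℝ) :
    (∑ t ∈ s, f t) *ᵥ v = ∑ t ∈ s, f t *ᵥ v := by
  funext x
  simp only [Matrix.mulVec, dotProduct, Finset.sum_apply, Matrix.sum_apply,
    Finset.sum_mul]
  rw [Finset.sum_comm]

lemma trace_conj_lower (Bm : Matrix (Fin m) (Fin n) ℝ) (W : Matrix (Fin n) (Fin n) ℝ) {σ : ℝ}
    (hW : ∀ x : Fin n → ℝ, σ * ∑ i, x i ^ 2 ≤ x ⬝ᵥ W *ᵥ x) :
    σ * (Bmᵀ * Bm).trace ≤ (Bm * W * Bmᵀ).trace := by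
  have h1 : (Bm * W * Bmᵀ).trace = ∑ i, (Bm i) ⬝ᵥ W *ᵥ (Bm i) := by
    simp only [Matrix.trace, Matrix.diag, Matrix.mul_apply, dotProduct,
      Matrix.mulVec, Matrix.transpose_apply, Finset.mul_sum, Finset.sum_mul]
    refine Finset.sum_congr rfl fun i _ => ?_
    rw [Finset.sum_comm]
    exact Finset.sum_congr rfl fun a _ => Finset.sum_congr rfl fun b _ => by ring
  have h2 : (Bmᵀ * Bm).trace = ∑ i, ∑ a, (Bm i a) ^ 2 := by
    simp only [Matrix.trace, Matrix.diag, Matrix.mul_apply, Matrix.transpose_apply]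
    rw [Finset.sum_comm]
    exact Finset.sum_congr rfl fun i _ => Finset.sum_congr rfl fun a _ => (sq _).symm
  rw [h1, h2, Finset.mul_sum]
  exact Finset.sum_le_sum fun i _ => hW (Bm i)

lemma trace_mul_lower {M W : Matrix (Fin n) (Fin n) ℝ} (hM : M.PosSemidef) {σ : ℝ}
    (hW : ∀ x : Fin n → ℝ, σ * ∑ i, x i ^ 2 ≤ x ⬝ᵥ W *ᵥ x) :
    σ * M.trace ≤ (M * W).trace := by
  obtain ⟨C, hC⟩ : ∃ C : Matrix (Fin n) (Fin n) ℝ, M = Cᴴ * C := by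
    open scoped MatrixOrder in exact CStarAlgebra.nonneg_iff_eq_star_mul_self.mp hM.nonneg
  rw [Matrix.conjTranspose_eq_transpose_of_trivial] at hC
  have h1 : (M * W).trace = (C * W * Cᵀ).trace := by
    rw [hC]
    exact (Matrix.trace_mul_cycle C W Cᵀ).symm
  have h2 : M.trace = (Cᵀ * C).trace := by rw [hC]
  rw [h1, h2]
  exact trace_conj_lower C W hW

lemma trace_transpose_mul_self_nonneg (M : Matrix (Fin m) (Fin n) ℝ) :
    0 ≤ (Mᵀ * M).trace := by
  simp only [Matrix.trace, Matrix.diag, Matrix.mul_apply, Matrix.transpose_apply]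
  exact Finset.sum_nonneg fun i _ => Finset.sum_nonneg fun j _ => mul_self_nonneg _

lemma tendsto_quad {F : ℕ → Matrix (Fin n) (Fin n) ℝ} {L : Matrix (Fin n) (Fin n) ℝ}
    (h : ∀ a b, Filter.Tendsto (fun q => F q a b) Filter.atTop (𝓝 (L a b)))
    (x : Fin n → ℝ) :
    Filter.Tendsto (fun q => x ⬝ᵥ F q *ᵥ x) Filter.atTop (𝓝 (x ⬝ᵥ L *ᵥ x)) := by
  simp only [dotProduct, Matrix.mulVec]
  apply tendsto_finset_sum
  intro a _
  apply Filter.Tendsto.const_mul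
  apply tendsto_finset_sum
  intro b _
  exact (h a b).mul_const (x b)

end Aux6
section Aux7
variable {d k N : ℕ} {Pr : Matrix (Fin N) (Fin N) ℝ}
  {A : Fin N → Matrix (Fin d) (Fin d) ℝ} {B : Fin N → Matrix (Fin d) (Fin k) ℝ}
  {Q : Fin N → Matrix (Fin d) (Fin d) ℝ} {R : Fin N → Matrix (Fin k) (Fin k) ℝ}
  {K : Fin N → Matrix (Fin k) (Fin d) ℝ}

lemma isLyap_iff_flat {P : Fin N → Matrix (Fin d) (Fin d) ℝ} :
    IsLyap Pr A B Q R K P ↔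
      flat P = flat (fun i => Q i + (K i)ᵀ * R i * K i) + calA Pr (Gam A B K) *ᵥ flat P := by
  rw [← flat_opL]
  constructor
  · intro hP
    funext p
    obtain ⟨i, a, b⟩ := p
    have := hP i
    show P i a b = _
    rw [this]
    simp [flat, opL, Matrix.add_apply]
  · intro h
    intro i
    ext a b
    have hx := congrFun h (i, a, b)
    show P i a b = _
    rw [show P i a b = flat P (i, a, b) from rfl, hx]
    simp [flat, opL, Matrix.add_apply]

lemma exists_isLyap (hdet : IsUnit (1 - calA Pr (Gam A B K)).det) :
    ∃ P, IsLyap Pr A B Q R K P := by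
  classical
  set M := calA Pr (Gam A B K) with hM
  set c : Fin N → Matrix (Fin d) (Fin d) ℝ := fun i => Q i + (K i)ᵀ * R i * K i with hc
  set v : Fin N × Fin d × Fin d → ℝ := (1 - M)⁻¹ *ᵥ flat c with hv
  set P : Fin N → Matrix (Fin d) (Fin d) ℝ := fun i => Matrix.of fun a b => v (i, a, b)
    with hP
  have hflat : flat P = v := by funext p; obtain ⟨i, a, b⟩ := p; rfl
  have hfix : (1 - M) *ᵥ v = flat c := by
    rw [hv, Matrix.mulVec_mulVec, Matrix.mul_nonsing_inv _ hdet, Matrix.one_mulVec]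
  have hv2 : v = flat c + M *ᵥ v := by
    rw [Matrix.sub_mulVec, Matrix.one_mulVec] at hfix
    funext x
    have hx := congrFun hfix x
    simp only [Pi.sub_apply] at hx
    simp only [Pi.add_apply]
    linarith
  refine ⟨P, isLyap_iff_flat.mpr ?_⟩
  rw [hflat, ← hc, ← hM, ← hv2]

end Aux7
/-- coercivity (growth part): `C(K) ≥ μ Λ_min(R) ‖K‖₂²`, and
consequently `C(K^l) → ∞` along any stabilizing sequence with `‖K^l‖₂ → ∞`. -/
theorem coercivity_growth
    (d k N : ℕ) (hd : 0 < d) (hk : 0 < k) (hN : 0 < N)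
    (A : Fin N → Matrix (Fin d) (Fin d) ℝ) (B : Fin N → Matrix (Fin d) (Fin k) ℝ)
    (Pr : Matrix (Fin N) (Fin N) ℝ)
    (hPr : ∀ i j, 0 ≤ Pr i j) (hPrSum : ∀ i, ∑ j, Pr i j = 1)
    (piv : Fin N → ℝ) (hpiv : ∀ i, 0 < piv i) (hpivSum : ∑ i, piv i = 1)
    (Sg : Matrix (Fin d) (Fin d) ℝ) (hSg : Sg.PosDef)
    (Q : Fin N → Matrix (Fin d) (Fin d) ℝ) (hQ : ∀ i, (Q i).PosDef)
    (R : Fin N → Matrix (Fin k) (Fin k) ℝ) (hR : ∀ i, (R i).PosDef) :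
    (∀ K : Fin N → Matrix (Fin k) (Fin d) ℝ, MSS Pr A B K →
        mu piv Sg * lamMin R * norm2sq K ≤ cost Pr A B Q R piv Sg K) ∧
    ∀ Kl : ℕ → Fin N → Matrix (Fin k) (Fin d) ℝ,
      (∀ l, MSS Pr A B (Kl l)) →
      Tendsto (fun l => Real.sqrt (norm2sq (Kl l))) atTop atTop →
      Tendsto (fun l => cost Pr A B Q R piv Sg (Kl l)) atTop atTop := by
  classical
  haveI hNne : Nonempty (Fin N) := ⟨⟨0, hN⟩⟩
  haveI : Nonempty (Fin d) := ⟨⟨0, hd⟩⟩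
  have hSgf := sigmaMin_facts hSg hd
  have hpiv_inf : 0 < ⨅ i, piv i := by
    obtain ⟨i₀, hi₀⟩ := Finite.exists_min piv
    exact lt_of_lt_of_le (hpiv i₀) (le_ciInf hi₀)
  have hmu_pos : 0 < mu piv Sg := mul_pos hpiv_inf hSgf.1
  have hlam_pos : 0 < lamMin R := by
    obtain ⟨i₀, hi₀⟩ := Finite.exists_min fun i => sigmaMin (R i)
    exact lt_of_lt_of_le (sigmaMin_facts (hR i₀) hk).1 (le_ciInf hi₀)
  have hlam_le : ∀ i, lamMin R ≤ sigmaMin (R i) := fun i =>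
    ciInf_le ⟨0, by rintro _ ⟨j, rfl⟩; exact (sigmaMin_facts (hR j) hk).1.le⟩ i
  have hpiv_le : ∀ i, (⨅ j, piv j) ≤ piv i := fun i =>
    ciInf_le ⟨0, by rintro _ ⟨j, rfl⟩; exact (hpiv j).le⟩ i
  have hn2 : ∀ K' : Fin N → Matrix (Fin k) (Fin d) ℝ, 0 ≤ norm2sq K' := fun K' =>
    Finset.sum_nonneg fun i _ => trace_transpose_mul_self_nonneg _
  have main : ∀ K, MSS Pr A B K →
      mu piv Sg * lamMin R * norm2sq K ≤ cost Pr A B Q R piv Sg K := by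
    intro K hK
    set Γ := Gam A B K with hΓ
    set c : Fin N → Matrix (Fin d) (Fin d) ℝ := fun i => Q i + (K i)ᵀ * R i * K i with hc
    have hcpsd : ∀ i, (c i).PosSemidef := fun i =>
      psd_add (hQ i).posSemidef (psd_conj (hR i).posSemidef (K i))
    obtain ⟨hdet, m, hm_pos, hdecay⟩ := spectral_decay (calA Pr Γ) hK
    have hex : ∃ P, IsLyap Pr A B Q R K P := exists_isLyap hdet
    set P := PK Pr A B Q R K with hPdef
    have hPl : IsLyap Pr A B Q R K P := by
      rw [hPdef, PK, dif_pos hex]; exact hex.choose_spec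
    have hfix := isLyap_iff_flat.mp hPl
    set Sq : ℕ → (Fin N → Matrix (Fin d) (Fin d) ℝ) :=
      fun q => ∑ t ∈ Finset.range (m * q), (opL Pr Γ)^[t] c with hSq
    have hSq_psd : ∀ q i, ((Sq q) i).PosSemidef := by
      intro q i
      have h : (Sq q) i = ∑ t ∈ Finset.range (m * q), ((opL Pr Γ)^[t] c) i := by
        rw [hSq]; simp [Finset.sum_apply]
      rw [h]
      exact psd_sum _ _ fun t _ => iter_opL_psd hPr hcpsd t i
    have hflatSq : ∀ q,
        flat (Sq q) = (∑ t ∈ Finset.range (m * q), (calA Pr Γ) ^ t) *ᵥ flat c := by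
      intro q
      rw [sum_mulVec]
      funext p
      rw [hSq]
      have h : flat (∑ t ∈ Finset.range (m * q), (opL Pr Γ)^[t] c) p
          = ∑ t ∈ Finset.range (m * q), flat ((opL Pr Γ)^[t] c) p := by
        simp [flat, Finset.sum_apply, Matrix.sum_apply]
      rw [h, Finset.sum_apply]
      exact Finset.sum_congr rfl fun t _ => by rw [flat_iter_opL]
    have hconv : ∀ i a b,
        Tendsto (fun q => Sq q i a b) atTop (𝓝 (P i a b)) := by
      intro i a b
      have hteq : ∀ q, Sq q i a b
          = P i a b - ((calA Pr Γ) ^ (m * q) *ᵥ flat P) (i, a, b) := by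
        intro q
        have ht := vec_telescope (calA Pr Γ) (flat P) (flat c) hfix (m * q)
        have h1 := congrFun ht (i, a, b)
        rw [Pi.add_apply] at h1
        have h2 := congrFun (hflatSq q) (i, a, b)
        have h3 : flat P (i, a, b) = P i a b := rfl
        have h4 : flat (Sq q) (i, a, b) = Sq q i a b := rfl
        rw [h3] at h1
        rw [h4] at h2
        linarith [h2]
      have h5 := (hdecay (flat P) (i, a, b)).const_sub (P i a b)
      rw [sub_zero] at h5
      simpa [← hteq] using h5
    have hpsd : ∀ i, (P i).PosSemidef := by
      intro i
      apply psd_mk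
      · ext a b
        show P i b a = P i a b
        have h2 : ∀ q, Sq q i b a = Sq q i a b := by
          intro q
          have hs := psd_symm (hSq_psd q i)
          calc Sq q i b a = (Sq q i)ᵀ a b := rfl
            _ = Sq q i a b := by rw [hs]
        have h1 : Tendsto (fun q => Sq q i a b) atTop (𝓝 (P i b a)) := by
          have := hconv i b a
          simpa [h2] using this
        exact tendsto_nhds_unique h1 (hconv i a b)
      · intro x
        exact ge_of_tendsto' (tendsto_quad (hconv i) x) fun q => psd_quad (hSq_psd q i) x
    -- trace chain
    have step1 : ∀ i, sigmaMin Sg * ((K i)ᵀ * R i * K i).trace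
        ≤ ((K i)ᵀ * R i * K i * Sg).trace := fun i =>
      trace_mul_lower (psd_conj (hR i).posSemidef (K i)) hSgf.2
    have step2 : ∀ i, ((K i)ᵀ * R i * K i * Sg).trace ≤ (P i * Sg).trace := by
      intro i
      have hdiff : (P i - (K i)ᵀ * R i * K i).PosSemidef := by
        have heq := hPl i
        have h2 : P i - (K i)ᵀ * R i * K i = Q i + opL Pr Γ P i := by
          rw [heq]; show Q i + (K i)ᵀ * R i * K i + opL Pr Γ P i - (K i)ᵀ * R i * K i = _
          abel
        rw [h2]
        exact psd_add (hQ i).posSemidef (opL_psd hPr hpsd i)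
      have h0 : 0 ≤ ((P i - (K i)ᵀ * R i * K i) * Sg).trace := by
        have hz := trace_mul_lower hdiff (σ := 0) (fun x => by
          simpa using psd_quad hSg.posSemidef x)
        simpa using hz
      have hexp : ((P i - (K i)ᵀ * R i * K i) * Sg).trace
          = (P i * Sg).trace - ((K i)ᵀ * R i * K i * Sg).trace := by
        rw [Matrix.sub_mul, Matrix.trace_sub]
      linarith
    have step3 : ∀ i, lamMin R * ((K i)ᵀ * K i).trace ≤ ((K i)ᵀ * R i * K i).trace := by
      intro i
      have hq : ∀ x : Fin k → ℝ, lamMin R * ∑ j, x j ^ 2 ≤ x ⬝ᵥ R i *ᵥ x := fun x =>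
        le_trans (mul_le_mul_of_nonneg_right (hlam_le i) (by positivity))
          ((sigmaMin_facts (hR i) hk).2 x)
      have ht := trace_conj_lower (K i)ᵀ (R i) hq
      rw [Matrix.transpose_transpose] at ht
      rwa [Matrix.trace_mul_comm] at ht
    have htK : ∀ i, 0 ≤ ((K i)ᵀ * K i).trace := fun i => trace_transpose_mul_self_nonneg _
    calc mu piv Sg * lamMin R * norm2sq K
        = ∑ i, (⨅ j, piv j) * (sigmaMin Sg * (lamMin R * ((K i)ᵀ * K i).trace)) := by
          rw [norm2sq, Finset.mul_sum]
          exact Finset.sum_congr rfl fun i _ => by rw [mu]; ring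
      _ ≤ ∑ i, piv i * (P i * Sg).trace := by
          refine Finset.sum_le_sum fun i _ => ?_
          have hX : 0 ≤ sigmaMin Sg * (lamMin R * ((K i)ᵀ * K i).trace) := by
            have := mul_nonneg hlam_pos.le (htK i)
            exact mul_nonneg hSgf.1.le this
          have hchain : sigmaMin Sg * (lamMin R * ((K i)ᵀ * K i).trace)
              ≤ (P i * Sg).trace := by
            have h1 : sigmaMin Sg * (lamMin R * ((K i)ᵀ * K i).trace)
                ≤ sigmaMin Sg * ((K i)ᵀ * R i * K i).trace :=
              mul_le_mul_of_nonneg_left (step3 i) hSgf.1.le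
            linarith [step1 i, step2 i]
          calc (⨅ j, piv j) * (sigmaMin Sg * (lamMin R * ((K i)ᵀ * K i).trace))
              ≤ piv i * (sigmaMin Sg * (lamMin R * ((K i)ᵀ * K i).trace)) :=
                mul_le_mul_of_nonneg_right (hpiv_le i) hX
            _ ≤ piv i * (P i * Sg).trace :=
                mul_le_mul_of_nonneg_left hchain (hpiv i).le
      _ = cost Pr A B Q R piv Sg K := by rw [cost, hPdef]
  refine ⟨main, fun Kl hKl hsq => ?_⟩
  have hb : ∀ l, mu piv Sg * lamMin R * Real.sqrt (norm2sq (Kl l)) ^ 2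
      ≤ cost Pr A B Q R piv Sg (Kl l) := by
    intro l
    rw [Real.sq_sqrt (hn2 _)]
    exact main (Kl l) (hKl l)
  apply tendsto_atTop_mono hb
  have h2 : Tendsto (fun l => Real.sqrt (norm2sq (Kl l)) ^ 2) atTop atTop := by
    have := hsq.atTop_mul_atTop₀ hsq
    simpa [pow_two] using this
  exact h2.const_mul_atTop (mul_pos hmu_pos hlam_pos)

end MJLS
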